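/- Let X ⊆ ℝ² be a compact set and X⁽¹⁾ ⊆ X a closed subset such that X \ X⁽¹⁾ is a disjoint union of open dyadic square interiors with null diameters and with boundaries contained in X⁽¹⁾. Let Y be a metric space and f : X⁽¹⁾ → Y continuous. Suppose for each square s (closure of a component of X \ X⁽¹⁾) there is a continuous extension h_s : s → Y of f|_{∂s} with diam h_s(s) ≤ 2·diam f(∂s). Then the function f̄ : X → Y defined by f̄ = f on X⁽¹⁾ and f̄ = h_s on each s is continuous. -/
import Mathlib


/-- The closed dyadic square of generation `i` with lower-left corner `(j/2^i, k/2^i)`. -/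
def dyadicSquare (i : ℕ) (j k : ℤ) : Set (ℝ × ℝ) :=
  Set.Icc ((j : ℝ) / 2 ^ i) ((j + 1 : ℝ) / 2 ^ i) ×ˢ
    Set.Icc ((k : ℝ) / 2 ^ i) ((k + 1 : ℝ) / 2 ^ i)

open Metric Set Filter Topology

lemma dyadicSquare_isClosed (i : ℕ) (j k : ℤ) : IsClosed (dyadicSquare i j k) :=
  isClosed_Icc.prod isClosed_Icc

lemma dyadicSquare_isCompact (i : ℕ) (j k : ℤ) : IsCompact (dyadicSquare i j k) :=
  isCompact_Icc.prod isCompact_Icc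

lemma dyadicSquare_frontier_nonempty (i : ℕ) (j k : ℤ) :
    (frontier (dyadicSquare i j k)).Nonempty := by
  refine ⟨((j : ℝ) / 2 ^ i, (k : ℝ) / 2 ^ i), ?_⟩
  rw [(dyadicSquare_isClosed i j k).frontier_eq]
  constructor
  · refine ⟨⟨le_refl _, ?_⟩, ⟨le_refl _, ?_⟩⟩ <;>
      exact (div_le_div_iff_of_pos_right (by positivity)).mpr (by linarith)
  · intro hmem
    rw [dyadicSquare, interior_prod_eq, interior_Icc, interior_Icc] at hmem
    exact lt_irrefl _ hmem.1.1

/-- Gluing a continuous map on a one-skeleton with controlled extensions over a null family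
of dyadic squares yields a continuous map. -/
theorem glue_extensions_continuous
    {Y : Type*} [MetricSpace Y]
    (X X₁ : Set (ℝ × ℝ)) (hX : IsCompact X) (hsub : X₁ ⊆ X) (hX₁ : IsClosed X₁)
    (sq : ℕ → Set (ℝ × ℝ))
    (hdyadic : ∀ n, ∃ i j k, sq n = dyadicSquare i j k)
    (hsqX : ∀ n, sq n ⊆ X)
    (hfr : ∀ n, frontier (sq n) ⊆ X₁)
    (hdisj : Pairwise fun m n => Disjoint (interior (sq m)) (interior (sq n)))
    (hcover : X \ X₁ = ⋃ n, interior (sq n))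
    (hnull : ∀ ε > 0, {n | ε ≤ Metric.diam (sq n)}.Finite)
    (f : ℝ × ℝ → Y) (hf : ContinuousOn f X₁)
    (h : ℕ → ℝ × ℝ → Y)
    (hhcont : ∀ n, ContinuousOn (h n) (sq n))
    (hhext : ∀ n, ∀ x ∈ frontier (sq n), h n x = f x)
    (hhdiam : ∀ n, Metric.diam (h n '' sq n) ≤ 2 * Metric.diam (f '' frontier (sq n)))
    (g : ℝ × ℝ → Y)
    (hg₁ : ∀ x ∈ X₁, g x = f x)
    (hg₂ : ∀ n, ∀ x ∈ sq n, g x = h n x) :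
    ContinuousOn g X := by
  have hsqclosed : ∀ n, IsClosed (sq n) := fun n => by
    obtain ⟨i, j, k, hn⟩ := hdyadic n; rw [hn]; exact dyadicSquare_isClosed i j k
  have hsqcompact : ∀ n, IsCompact (sq n) := fun n => by
    obtain ⟨i, j, k, hn⟩ := hdyadic n; rw [hn]; exact dyadicSquare_isCompact i j k
  have hfrne : ∀ n, (interior (sq n)).Nonempty → (frontier (sq n)).Nonempty := fun n _ => by
    obtain ⟨i, j, k, hn⟩ := hdyadic n; rw [hn]; exact dyadicSquare_frontier_nonempty i j k
  have hfrsub : ∀ n, frontier (sq n) ⊆ sq n := fun n => (hsqclosed n).frontier_subset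
  have hX₁cpt : IsCompact X₁ := hX.of_isClosed_subset hX₁ hsub
  have hintsub : ∀ n, interior (sq n) ⊆ X \ X₁ := by
    intro n
    rw [hcover]
    exact Set.subset_iUnion (fun n => interior (sq n)) n
  intro x hx
  by_cases hx₁ : x ∈ X₁
  · -- x on the one-skeleton
    have hunif : UniformContinuousOn f X₁ := hX₁cpt.uniformContinuousOn_of_continuous hf
    rw [Metric.uniformContinuousOn_iff] at hunif
    rw [ContinuousWithinAt, Metric.tendsto_nhds]
    intro ε hε
    obtain ⟨δ₀, hδ₀, hδ⟩ := hunif (ε / 6) (by positivity)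
    set F := {n | δ₀ / 3 ≤ Metric.diam (sq n)} with hF
    have hFfin : F.Finite := hnull _ (by positivity)
    have hP : ∀ n ∈ F, ∀ᶠ y in 𝓝 x, y ∈ sq n → dist (h n y) (f x) < ε := by
      intro n _
      by_cases hxn : x ∈ sq n
      · have hxfr : x ∈ frontier (sq n) := by
          rw [(hsqclosed n).frontier_eq]
          exact ⟨hxn, fun hint => (hintsub n hint).2 hx₁⟩
        have h2 : ∀ᶠ y in 𝓝[sq n] x, dist (h n y) (h n x) < ε :=
          Metric.tendsto_nhds.mp (hhcont n x hxn) ε hε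
        rw [eventually_nhdsWithin_iff] at h2
        simpa [hhext n x hxfr] using h2
      · have hev : ∀ᶠ y in 𝓝 x, y ∉ sq n :=
          (hsqclosed n).isOpen_compl.eventually_mem hxn
        filter_upwards [hev] with y hy hy'
        exact absurd hy' hy
    have hPall : ∀ᶠ y in 𝓝 x, ∀ n ∈ F, y ∈ sq n → dist (h n y) (f x) < ε :=
      (Filter.eventually_all_finite hFfin).mpr hP
    have hball : ∀ᶠ y in 𝓝 x, dist y x < δ₀ / 3 :=
      Filter.eventually_of_mem (Metric.ball_mem_nhds x (by positivity : (0:ℝ) < δ₀ / 3))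
        (fun y hy => by rwa [Metric.mem_ball] at hy)
    rw [hg₁ x hx₁]
    filter_upwards [(hPall.and hball).filter_mono nhdsWithin_le_nhds,
      self_mem_nhdsWithin] with y hy hyX
    obtain ⟨hPy, hby⟩ := hy
    by_cases hy₁ : y ∈ X₁
    · rw [hg₁ y hy₁]
      have : dist (f y) (f x) < ε / 6 := hδ y hy₁ x hx₁ (by linarith)
      linarith
    · have hmem : y ∈ ⋃ n, interior (sq n) := by
        rw [← hcover]; exact ⟨hyX, hy₁⟩
      obtain ⟨n, hyn⟩ := Set.mem_iUnion.mp hmem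
      have hysq : y ∈ sq n := interior_subset hyn
      rw [hg₂ n y hysq]
      by_cases hnF : n ∈ F
      · exact hPy n hnF hysq
      · have hdiam : Metric.diam (sq n) < δ₀ / 3 := not_le.mp hnF
        obtain ⟨z, hz⟩ := hfrne n ⟨y, hyn⟩
        have hzsq : z ∈ sq n := hfrsub n hz
        have hbd : Bornology.IsBounded (sq n) := (hsqcompact n).isBounded
        have hzy : dist z y ≤ Metric.diam (sq n) :=
          Metric.dist_le_diam_of_mem hbd hzsq hysq
        have hzx : dist z x < δ₀ := by
          calc dist z x ≤ dist z y + dist y x := dist_triangle z y x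
            _ < δ₀ / 3 + δ₀ / 3 := by linarith
            _ < δ₀ := by linarith
        have h1 : dist (h n y) (h n z) ≤ Metric.diam (h n '' sq n) :=
          Metric.dist_le_diam_of_mem
            (((hsqcompact n).image_of_continuousOn (hhcont n)).isBounded)
            (Set.mem_image_of_mem _ hysq) (Set.mem_image_of_mem _ hzsq)
        have h2 : Metric.diam (f '' frontier (sq n)) ≤ ε / 6 := by
          apply Metric.diam_le_of_forall_dist_le (by positivity)
          rintro _ ⟨a, ha, rfl⟩ _ ⟨b, hb, rfl⟩
          have hab : dist a b ≤ Metric.diam (sq n) :=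
            Metric.dist_le_diam_of_mem hbd (hfrsub n ha) (hfrsub n hb)
          exact le_of_lt (hδ a (hfr n ha) b (hfr n hb) (by linarith))
        have h3 : dist (h n z) (f x) < ε / 6 := by
          rw [hhext n z hz]; exact hδ z (hfr n hz) x hx₁ hzx
        have h4 := hhdiam n
        calc dist (h n y) (f x) ≤ dist (h n y) (h n z) + dist (h n z) (f x) :=
              dist_triangle _ _ _
          _ < ε := by linarith
  · -- x in the interior of some square
    have hmem : x ∈ ⋃ n, interior (sq n) := by
      rw [← hcover]; exact ⟨hx, hx₁⟩
    obtain ⟨n, hxn⟩ := Set.mem_iUnion.mp hmem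
    have hnx : interior (sq n) ∈ 𝓝 x := isOpen_interior.mem_nhds hxn
    have hca : ContinuousAt (h n) x :=
      (hhcont n).continuousAt (Filter.mem_of_superset hnx interior_subset)
    have heq : h n =ᶠ[𝓝 x] g :=
      Filter.eventually_of_mem hnx (fun y hy => (hg₂ n y (interior_subset hy)).symm)
    exact (hca.congr heq).continuousWithinAt
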